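/- Let m be a positive integer and let L be a list assignment on a path P with an odd number n of vertices v_1, …, v_n such that |L(v_i)| = 4m for all i. Then S_L(P) ≥ 2nm − 2m + |X̂_1| + |X̂_n| + |A|. -/

import Mathlib

/-- Given the lists `L(v_1), …, L(v_n)` of a path (as a list of finsets, in order) and a
"previous" set, the sequence `X_1 = L(v_1)`, `X_i = L(v_i) \ X_{i-1}`. -/
def Xseq : Finset ℕ → List (Finset ℕ) → List (Finset ℕ)
  | _, [] => []
  | prev, l :: ls => (l \ prev) :: Xseq (l \ prev) ls

/-- `S_L(P) = Σ_{i=1}^n |X_i|`. -/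
def SL (ls : List (Finset ℕ)) : ℕ := ((Xseq ∅ ls).map Finset.card).sum

/-- `X_{i+1}` (0-indexed access to the sequence `X_1, …, X_n`). -/
def Xat (ls : List (Finset ℕ)) (i : ℕ) : Finset ℕ := (Xseq ∅ ls).getD i ∅

/-- `A = ∩_{x ∈ V(P)} L(x)`. -/
def Aset : List (Finset ℕ) → Finset ℕ
  | [] => ∅
  | a :: rest => rest.foldl (· ∩ ·) a

/-- For a colour `c`, the least 0-indexed position `i` with `c ∉ L(v_{i+1})`
(so the paper's `f(c)` is `firstMissing + 1`). -/
noncomputable def firstMissing (ls : List (Finset ℕ)) (c : ℕ) : ℕ :=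
  sInf {i | i < ls.length ∧ c ∉ ls.getD i ∅}

open Classical in
/-- `X̂_1 = { c ∈ L(v_1) \ A : f(c) is even }` (with the paper's 1-indexed `f`,
i.e. `firstMissing` is odd). -/
noncomputable def hatX1 (ls : List (Finset ℕ)) : Finset ℕ :=
  (ls.getD 0 ∅ \ Aset ls).filter fun c => Odd (firstMissing ls c)

/-- `X̂_n = X_n \ A`. -/
def hatXn (ls : List (Finset ℕ)) : Finset ℕ := Xat ls (ls.length - 1) \ Aset ls

/-- `L[p,q]`: delete the colours of `p` from `L(v_1)` and the colours of `q` from `L(v_n)`. -/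
def delEnds (p q : Finset ℕ) (ls : List (Finset ℕ)) : List (Finset ℕ) :=
  ((ls.modifyHead (· \ p)).reverse.modifyHead (· \ q)).reverse

/-- The damage `dam_{L,P}(p,q) = S_L(P) − S_{L[p,q]}(P)` (as an integer). -/
def damZ (ls : List (Finset ℕ)) (p q : Finset ℕ) : ℤ :=
  (SL ls : ℤ) - SL (delEnds p q ls)

/-- The path `v_1 ⋯ v_n` with lists `L(v_1), …, L(v_n)` admits a `b`-tuple list
colouring: consecutive vertices receive disjoint `b`-subsets of their lists. -/
def PathListColorable (b : ℕ) (ls : List (Finset ℕ)) : Prop :=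
  ∃ f : ℕ → Finset ℕ,
    (∀ i, i < ls.length → f i ⊆ ls.getD i ∅ ∧ (f i).card = b) ∧
    (∀ i, i + 1 < ls.length → Disjoint (f i) (f (i + 1)))

-- auxiliary lemmas

lemma Xseq_length (prev : Finset ℕ) (ls : List (Finset ℕ)) :
    (Xseq prev ls).length = ls.length := by
  induction ls generalizing prev with
  | nil => rfl
  | cons a t ih => simp [Xseq, ih]

lemma Xseq_append (prev : Finset ℕ) (l₁ l₂ : List (Finset ℕ)) :
    Xseq prev (l₁ ++ l₂) = Xseq prev l₁ ++ Xseq ((Xseq prev l₁).getLastD prev) l₂ := by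
  induction l₁ generalizing prev with
  | nil => simp [Xseq]
  | cons a t ih =>
    simp only [List.cons_append, Xseq, List.getLastD_cons]
    exact congrArg (List.cons _) (ih (a \ prev))

lemma getLastD_eq_getD (l : List (Finset ℕ)) (h : l ≠ []) (d : Finset ℕ) :
    l.getLastD d = l.getD (l.length - 1) ∅ := by
  induction l generalizing d with
  | nil => simp at h
  | cons a t ih =>
    cases t with
    | nil => simp [List.getLastD, List.getD]
    | cons b t' => simpa [List.getLastD_cons] using ih (by simp) d

lemma mem_foldl_inter (a : Finset ℕ) (rest : List (Finset ℕ)) (x : ℕ) :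
    x ∈ rest.foldl (· ∩ ·) a ↔ x ∈ a ∧ ∀ l ∈ rest, x ∈ l := by
  induction rest generalizing a with
  | nil => simp
  | cons b t ih =>
    simp only [List.foldl_cons, ih, Finset.mem_inter, List.mem_cons]
    constructor
    · rintro ⟨⟨h1, h2⟩, h3⟩
      exact ⟨h1, fun l hl => hl.elim (fun e => e ▸ h2) (h3 l)⟩
    · rintro ⟨h1, h2⟩
      exact ⟨⟨h1, h2 b (Or.inl rfl)⟩, fun l hl => h2 l (Or.inr hl)⟩

lemma mem_Aset {ls : List (Finset ℕ)} (h : ls ≠ []) (x : ℕ) :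
    x ∈ Aset ls ↔ ∀ l ∈ ls, x ∈ l := by
  cases ls with
  | nil => simp at h
  | cons a t =>
    simp only [Aset, mem_foldl_inter, List.mem_cons]
    constructor
    · rintro ⟨h1, h2⟩ l hl
      exact hl.elim (fun e => e ▸ h1) (h2 l)
    · intro h2
      exact ⟨h2 a (Or.inl rfl), fun l hl => h2 l (Or.inr hl)⟩

lemma Aset_append (ls : List (Finset ℕ)) (h : ls ≠ []) (b c : Finset ℕ) :
    Aset (ls ++ [b, c]) = Aset ls ∩ b ∩ c := by
  cases ls with
  | nil => simp at h
  | cons a t => simp [Aset, List.foldl_append]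

lemma sInf_eq_of {S : Set ℕ} {k : ℕ} (hk : k ∈ S) (hmin : ∀ j < k, j ∉ S) : sInf S = k := by
  refine le_antisymm (Nat.sInf_le hk) ?_
  by_contra h
  push_neg at h
  exact hmin _ h (Nat.sInf_mem ⟨k, hk⟩)

lemma mem_hatX1 (ls : List (Finset ℕ)) (x : ℕ) :
    x ∈ hatX1 ls ↔ x ∈ ls.getD 0 ∅ ∧ x ∉ Aset ls ∧ Odd (firstMissing ls x) := by
  simp [hatX1, Finset.mem_filter, Finset.mem_sdiff, and_assoc]

lemma not_mem_Aset_iff {ls : List (Finset ℕ)} (h : ls ≠ []) (x : ℕ) :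
    x ∉ Aset ls ↔ ∃ i, i < ls.length ∧ x ∉ ls.getD i ∅ := by
  rw [mem_Aset h]
  constructor
  · intro hx
    push_neg at hx
    obtain ⟨l, hl, hxl⟩ := hx
    obtain ⟨i, hi, rfl⟩ := List.mem_iff_getElem.mp hl
    exact ⟨i, hi, by rwa [List.getD_eq_getElem _ _ hi]⟩
  · rintro ⟨i, hi, hxi⟩ hall
    exact hxi (by rw [List.getD_eq_getElem _ _ hi]; exact hall _ (List.getElem_mem hi))

lemma firstMissing_append {ls : List (Finset ℕ)} (h : ls ≠ []) (l₂ : List (Finset ℕ))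
    {x : ℕ} (hx : x ∉ Aset ls) :
    firstMissing (ls ++ l₂) x = firstMissing ls x := by
  obtain ⟨i0, hi0, hxi0⟩ := (not_mem_Aset_iff h x).mp hx
  have hne : {i | i < ls.length ∧ x ∉ ls.getD i ∅}.Nonempty := ⟨i0, hi0, hxi0⟩
  set k := firstMissing ls x with hk
  have hkmem : k ∈ {i | i < ls.length ∧ x ∉ ls.getD i ∅} := Nat.sInf_mem hne
  have hk1 := hkmem.1
  refine sInf_eq_of ?_ ?_
  · refine ⟨by simp only [List.length_append]; omega, ?_⟩
    rw [List.getD_append _ _ _ _ hkmem.1]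
    exact hkmem.2
  · intro j hj ⟨hj1, hj2⟩
    have hjlen : j < ls.length := lt_trans hj hkmem.1
    rw [List.getD_append _ _ _ _ hjlen] at hj2
    exact Nat.notMem_of_lt_sInf hj ⟨hjlen, hj2⟩

lemma key_ineq (m : ℕ) (Xn A b c : Finset ℕ) (hb : b.card = 4 * m) :
    4 * m + (A \ b).card + ((c \ (b \ Xn)) \ (A ∩ b ∩ c)).card + (A ∩ b ∩ c).card
      ≤ (b \ Xn).card + (c \ (b \ Xn)).card + (Xn \ A).card + A.card := by
  classical
  have h1 : (b \ Xn).card + (b ∩ Xn).card = 4 * m := by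
    rw [Finset.card_sdiff_add_card_inter]; exact hb
  have h2 : ((c \ (b \ Xn)) \ (A ∩ b ∩ c)).card + ((c \ (b \ Xn)) ∩ (A ∩ b ∩ c)).card
      = (c \ (b \ Xn)).card := Finset.card_sdiff_add_card_inter _ _
  have e1 : (A \ b).card + (A ∩ b).card = A.card := Finset.card_sdiff_add_card_inter _ _
  have e2 : ((A ∩ b) \ c).card + (A ∩ b ∩ c).card = (A ∩ b).card :=
    Finset.card_sdiff_add_card_inter _ _
  have h4 : (b ∩ Xn).card ≤ (Xn \ A).card + ((A ∩ b) \ c).card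
      + ((c \ (b \ Xn)) ∩ (A ∩ b ∩ c)).card := by
    have hsub : b ∩ Xn ⊆ (Xn \ A) ∪ ((A ∩ b) \ c) ∪ ((c \ (b \ Xn)) ∩ (A ∩ b ∩ c)) := by
      intro x hx
      simp only [Finset.mem_inter, Finset.mem_sdiff, Finset.mem_union] at hx ⊢
      by_cases hA : x ∈ A
      · by_cases hc : x ∈ c
        · exact Or.inr ⟨⟨hc, fun h => h.2 hx.2⟩, ⟨hA, hx.1⟩, hc⟩
        · exact Or.inl (Or.inr ⟨⟨hA, hx.1⟩, hc⟩)
      · exact Or.inl (Or.inl ⟨hx.2, hA⟩)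
    calc (b ∩ Xn).card ≤ _ := Finset.card_le_card hsub
      _ ≤ ((Xn \ A) ∪ ((A ∩ b) \ c)).card + ((c \ (b \ Xn)) ∩ (A ∩ b ∩ c)).card :=
          Finset.card_union_le _ _
      _ ≤ (Xn \ A).card + ((A ∩ b) \ c).card + ((c \ (b \ Xn)) ∩ (A ∩ b ∩ c)).card := by
          gcongr
          exact Finset.card_union_le _ _
  omega

lemma Aset_getD {ls : List (Finset ℕ)} (h : ls ≠ []) {x : ℕ} (hx : x ∈ Aset ls)
    {i : ℕ} (hi : i < ls.length) : x ∈ ls.getD i ∅ := by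
  rw [List.getD_eq_getElem _ _ hi]
  exact (mem_Aset h x).mp hx _ (List.getElem_mem hi)

lemma Xseq_ne_nil {ls : List (Finset ℕ)} (h : ls ≠ []) : Xseq ∅ ls ≠ [] := by
  intro he
  have := Xseq_length ∅ ls
  rw [he] at this
  exact h (List.length_eq_zero_iff.mp this.symm)

lemma Xseq_concat2 {ls : List (Finset ℕ)} (h : ls ≠ []) (b c : Finset ℕ) :
    Xseq ∅ (ls ++ [b, c]) = Xseq ∅ ls ++
      [b \ Xat ls (ls.length - 1), c \ (b \ Xat ls (ls.length - 1))] := by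
  rw [Xseq_append]
  congr 1
  rw [getLastD_eq_getD _ (Xseq_ne_nil h), Xseq_length]
  rfl

lemma SL_concat2 {ls : List (Finset ℕ)} (h : ls ≠ []) (b c : Finset ℕ) :
    SL (ls ++ [b, c]) = SL ls + (b \ Xat ls (ls.length - 1)).card
      + (c \ (b \ Xat ls (ls.length - 1))).card := by
  rw [SL, Xseq_concat2 h, List.map_append, List.sum_append, SL]
  simp [add_assoc]

lemma Xat_concat2 {ls : List (Finset ℕ)} (h : ls ≠ []) (b c : Finset ℕ) :
    Xat (ls ++ [b, c]) (ls.length + 1) = c \ (b \ Xat ls (ls.length - 1)) := by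
  rw [Xat, Xseq_concat2 h, List.getD_append_right _ _ _ _ (by rw [Xseq_length]; omega)]
  rw [Xseq_length]
  simp

lemma hatXn_concat2 {ls : List (Finset ℕ)} (h : ls ≠ []) (b c : Finset ℕ) :
    hatXn (ls ++ [b, c]) = (c \ (b \ Xat ls (ls.length - 1))) \ (Aset ls ∩ b ∩ c) := by
  rw [hatXn, Aset_append ls h b c]
  have hl : (ls ++ [b, c]).length - 1 = ls.length + 1 := by simp
  rw [hl, Xat_concat2 h]

lemma hatX1_concat2 {ls : List (Finset ℕ)} (h : ls ≠ []) (hodd : Odd ls.length)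
    (b c : Finset ℕ) :
    hatX1 (ls ++ [b, c]) = hatX1 ls ∪ (Aset ls \ b) := by
  classical
  ext x
  have hn : 0 < ls.length := List.length_pos_iff.mpr h
  have hget0 : (ls ++ [b, c]).getD 0 ∅ = ls.getD 0 ∅ := List.getD_append _ _ _ _ hn
  have hAset : Aset (ls ++ [b, c]) = Aset ls ∩ b ∩ c := Aset_append ls h b c
  rw [mem_hatX1, Finset.mem_union, mem_hatX1, Finset.mem_sdiff, hget0, hAset]
  by_cases hA : x ∈ Aset ls
  · have hx0 : x ∈ ls.getD 0 ∅ := Aset_getD h hA hn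
    have hnotA1 : ¬ (x ∈ ls.getD 0 ∅ ∧ x ∉ Aset ls ∧ Odd (firstMissing ls x)) := by
      rintro ⟨_, h2, _⟩; exact h2 hA
    by_cases hb : x ∈ b
    · by_cases hc : x ∈ c
      · have : x ∈ Aset ls ∩ b ∩ c := by simp [hA, hb, hc]
        simp only [this, not_true_eq_false, false_and, and_false, false_iff]
        rintro (h1 | h1)
        · exact hnotA1 h1
        · exact h1.2 hb
      · have hfm : firstMissing (ls ++ [b, c]) x = ls.length + 1 := by
          apply sInf_eq_of
          · refine ⟨by simp, ?_⟩
            rw [List.getD_append_right _ _ _ _ (by omega)]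
            simpa using hc
          · rintro j hj ⟨hjl, hjm⟩
            rcases lt_or_ge j ls.length with hjn | hjn
            · rw [List.getD_append _ _ _ _ hjn] at hjm
              exact hjm (Aset_getD h hA hjn)
            · have hjeq : j = ls.length := by omega
              rw [hjeq, List.getD_append_right _ _ _ _ (le_refl _)] at hjm
              simp at hjm
              exact hjm hb
        have hno : ¬ Odd (firstMissing (ls ++ [b, c]) x) := by
          rw [hfm, Nat.odd_add_one]
          simpa using hodd
        simp only [hno, and_false, false_iff]
        rintro (h1 | h1)
        · exact hnotA1 h1
        · exact h1.2 hb
    · have hfm : firstMissing (ls ++ [b, c]) x = ls.length := by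
        apply sInf_eq_of
        · refine ⟨by simp, ?_⟩
          rw [List.getD_append_right _ _ _ _ (le_refl _)]
          simpa using hb
        · rintro j hj ⟨hjl, hjm⟩
          rw [List.getD_append _ _ _ _ hj] at hjm
          exact hjm (Aset_getD h hA hj)
      have hA' : x ∉ Aset ls ∩ b ∩ c := by simp [hb]
      simp only [hfm, hodd, hx0, hA', not_false_eq_true, true_and, and_true, true_iff]
      right
      exact ⟨hA, hb⟩
  · have hfm : firstMissing (ls ++ [b, c]) x = firstMissing ls x :=
      firstMissing_append h [b, c] hA
    have hA' : x ∉ Aset ls ∩ b ∩ c := by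
      intro hx
      exact hA (Finset.mem_inter.mp (Finset.mem_inter.mp hx).1).1
    have hAb : x ∉ Aset ls \ b := fun hx => hA (Finset.mem_sdiff.mp hx).1
    simp [hfm, hA, hA', hAb]

lemma hatX1_concat2_card {ls : List (Finset ℕ)} (h : ls ≠ []) (hodd : Odd ls.length)
    (b c : Finset ℕ) :
    (hatX1 (ls ++ [b, c])).card = (hatX1 ls).card + (Aset ls \ b).card := by
  classical
  rw [hatX1_concat2 h hodd b c, Finset.card_union_of_disjoint]
  rw [Finset.disjoint_left]
  intro x hx hx'
  exact ((mem_hatX1 ls x).mp hx).2.1 (Finset.mem_sdiff.mp hx').1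


/-- Lemma `lem:hatsum`: for a path with an odd number `n` of vertices, all of whose lists
have size `4m`, `S_L(P) ≥ 2nm − 2m + |X̂_1| + |X̂_n| + |A|`. -/
theorem SL_ge_hatsum (m : ℕ) (hm : 0 < m) (ls : List (Finset ℕ))
    (hodd : Odd ls.length)
    (hcard : ∀ i, i < ls.length → (ls.getD i ∅).card = 4 * m) :
    2 * ls.length * m - 2 * m + (hatX1 ls).card + (hatXn ls).card + (Aset ls).card
      ≤ SL ls := by
  classical
  suffices H : ∀ N (ls : List (Finset ℕ)), ls.length = N → Odd ls.length →
      (∀ i, i < ls.length → (ls.getD i ∅).card = 4 * m) →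
      2 * ls.length * m - 2 * m + (hatX1 ls).card + (hatXn ls).card + (Aset ls).card
        ≤ SL ls from H _ ls rfl hodd hcard
  intro N
  induction N using Nat.strong_induction_on with
  | _ N ih =>
  rcases N with _ | _ | N
  · intro ls hlen hodd _
    rw [hlen] at hodd
    simp at hodd
  · intro ls hlen _ hcard
    obtain ⟨a, rfl⟩ := List.length_eq_one_iff.mp hlen
    have ha : a.card = 4 * m := by simpa using hcard 0 (by simp)
    have h1 : hatX1 [a] = ∅ := by
      simp [hatX1, Aset]
    have h2 : hatXn [a] = ∅ := by
      simp [hatXn, Xat, Xseq, Aset]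
    have h3 : SL [a] = a.card := by simp [SL, Xseq]
    rw [h1, h2, h3]
    simp [Aset, ha]
  · intro ls hlen hodd hcard
    -- decompose ls = l₀ ++ [b, c]
    obtain ⟨l₁, c, rfl⟩ : ∃ L b, ls = L ++ [b] := by
      rcases List.eq_nil_or_concat ls with h | ⟨L, b, h⟩
      · rw [h] at hlen; simp at hlen
      · exact ⟨L, b, by simpa [List.concat_eq_append] using h⟩
    obtain ⟨l₀, b, rfl⟩ : ∃ L b, l₁ = L ++ [b] := by
      rcases List.eq_nil_or_concat l₁ with h | ⟨L, b, h⟩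
      · rw [h] at hlen; simp at hlen
      · exact ⟨L, b, by simpa [List.concat_eq_append] using h⟩
    simp only [List.append_assoc, List.singleton_append, List.cons_append, List.nil_append]
      at hlen hodd hcard ⊢
    have hl0 : l₀.length = N := by simp at hlen; omega
    have hodd0 : Odd l₀.length := by
      rw [hl0]
      have h2 : Odd (N + 2) := by
        have : (l₀ ++ [b, c]).length = N + 2 := by omega
        rw [← this]; exact hodd
      rcases h2 with ⟨k, hk⟩
      exact ⟨k - 1, by omega⟩
    have hne : l₀ ≠ [] := by
      intro h
      rcases hodd0 with ⟨k, hk⟩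
      rw [h] at hk
      simp at hk
    have hcard0 : ∀ i, i < l₀.length → (l₀.getD i ∅).card = 4 * m := by
      intro i hi
      have := hcard i (by simp; omega)
      rwa [List.getD_append _ _ _ _ hi] at this
    have hb : b.card = 4 * m := by
      have := hcard l₀.length (by simp)
      rwa [List.getD_append_right _ _ _ _ (le_refl _), Nat.sub_self] at this
    have IH := ih N (by omega) l₀ hl0 hodd0 hcard0
    set Xn := Xat l₀ (l₀.length - 1) with hXn
    set A := Aset l₀ with hA
    have hSL : SL (l₀ ++ [b, c]) = SL l₀ + (b \ Xn).card + (c \ (b \ Xn)).card :=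
      SL_concat2 hne b c
    have hXnn : hatXn (l₀ ++ [b, c]) = (c \ (b \ Xn)) \ (A ∩ b ∩ c) :=
      hatXn_concat2 hne b c
    have hX1 : (hatX1 (l₀ ++ [b, c])).card = (hatX1 l₀).card + (A \ b).card :=
      hatX1_concat2_card hne hodd0 b c
    have hAs : Aset (l₀ ++ [b, c]) = A ∩ b ∩ c := Aset_append l₀ hne b c
    have key := key_ineq m Xn A b c hb
    have hIH' : 2 * l₀.length * m - 2 * m + (hatX1 l₀).card + (Xn \ A).card + A.card
        ≤ SL l₀ := by
      rw [hatXn] at IH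
      exact IH
    rw [hSL, hXnn, hX1, hAs]
    have hlen2 : (l₀ ++ [b, c]).length = l₀.length + 2 := by simp
    rw [hlen2]
    have hQ : 2 * (l₀.length + 2) * m = 2 * l₀.length * m + 4 * m := by ring
    rw [hQ]
    have hP : 2 * m ≤ 2 * l₀.length * m := by
      have h2 : 2 ≤ 2 * l₀.length := by
        have : l₀.length ≠ 0 := fun h => hne (List.length_eq_zero_iff.mp h)
        omega
      exact Nat.mul_le_mul_right m h2
    obtain ⟨P, hPe⟩ : ∃ P, 2 * l₀.length * m = P := ⟨_, rfl⟩
    rw [hPe] at hP hIH' ⊢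
    omega
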